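/- Let α ∈ [0,1) and set β := 1/(1−α). There exist constants 0 < C_1 ≤ C_2, depending only on a, d and α, such that for every integer j ≥ 1, every rectangle R ∈ 𝒦_j, and every x ∈ R: C_1 |R| ≤ (|x|_{a,∞})^{να} ≤ C_2 |R|; moreover the same two-sided estimate (with possibly different constants depending only on a, d, α) holds with |x|_{a,∞} replaced by |x|_a and by ⟨x⟩. -/

import Mathlib

open MeasureTheory

noncomputable section

/-- Number of outer intervals on each side at level `j`: `⌈j^{a-1}⌉`. -/
def mOut (a : ℝ) (j : ℕ) : ℤ := ⌈(j : ℝ) ^ (a - 1)⌉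

/-- Number of inner intervals at level `j`: `⌈j^{a}⌉`. -/
def mIn (a : ℝ) (j : ℕ) : ℤ := ⌈(j : ℝ) ^ a⌉

/-- Total number of intervals in the partition `𝒜_j^i`. -/
def numIv (a : ℝ) (j : ℕ) : ℤ := mIn a j + 2 * mOut a j

/-- Common length of the outer intervals. -/
def lenO (a β : ℝ) (j : ℕ) : ℝ :=
  (((j : ℝ) + 1) ^ (a * β) - (j : ℝ) ^ (a * β)) / ((mOut a j : ℤ) : ℝ)

/-- Common length of the inner intervals. -/
def lenI (a β : ℝ) (j : ℕ) : ℝ :=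
  2 * (j : ℝ) ^ (a * β) / ((mIn a j : ℤ) : ℝ)

/-- The `k`-th knot (from the left, `k = 0, …, numIv`) of the partition `𝒜_j^i` of
`A_j^i = [−(j+1)^{aβ}, (j+1)^{aβ})`: the two components of `A_j^i ∖ B_j^i` are divided
into `⌈j^{a-1}⌉` equal intervals each, and `B_j^i = [−j^{aβ}, j^{aβ})` into `⌈j^{a}⌉`
equal intervals. -/
def knot (a β : ℝ) (j : ℕ) (k : ℤ) : ℝ :=
  if k ≤ mOut a j then -((j : ℝ) + 1) ^ (a * β) + (k : ℝ) * lenO a β j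
  else if k ≤ mOut a j + mIn a j then
    -(j : ℝ) ^ (a * β) + ((k - mOut a j : ℤ) : ℝ) * lenI a β j
  else (j : ℝ) ^ (a * β) + ((k - mOut a j - mIn a j : ℤ) : ℝ) * lenO a β j

/-- The `k`-th interval of the partition `𝒜_j^i`. -/
def ivl (a β : ℝ) (j : ℕ) (k : ℤ) : Set ℝ :=
  Set.Ico (knot a β j k) (knot a β j (k + 1))

/-- The partition `𝒜_j^i` (with `a = a_i`), as a family of subsets of `ℝ`. -/
def partA (a β : ℝ) (j : ℕ) : Set (Set ℝ) :=
  {I | ∃ k : ℤ, 0 ≤ k ∧ k < numIv a j ∧ I = ivl a β j k}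

/-- The index `k` corresponds to an inner interval. -/
def isInnerIdx (a : ℝ) (j : ℕ) (k : ℤ) : Prop :=
  mOut a j ≤ k ∧ k < mOut a j + mIn a j

/-- The family `ℬ_j^i` of inner intervals. -/
def partInner (a β : ℝ) (j : ℕ) : Set (Set ℝ) :=
  {I | ∃ k : ℤ, isInnerIdx a j k ∧ I = ivl a β j k}

/-- `𝒜_j`: rectangles `I_1 × ⋯ × I_d` with `I_i ∈ 𝒜_j^i`, encoded by their factors. -/
def rectA {d : ℕ} (a : Fin d → ℝ) (β : ℝ) (j : ℕ) : Set (Fin d → Set ℝ) :=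
  {R | ∀ i, R i ∈ partA (a i) β j}

/-- `ℬ_j`: rectangles all of whose factors are inner intervals. -/
def rectB {d : ℕ} (a : Fin d → ℝ) (β : ℝ) (j : ℕ) : Set (Fin d → Set ℝ) :=
  {R | ∀ i, R i ∈ partInner (a i) β j}

/-- `𝒦_j := 𝒜_j ∖ ℬ_j` for `j ≥ 1`. -/
def rectK {d : ℕ} (a : Fin d → ℝ) (β : ℝ) (j : ℕ) : Set (Fin d → Set ℝ) :=
  rectA a β j \ rectB a β j

/-- `𝒦_0 := {[−1,1)^d}`. -/
def rectK0 (d : ℕ) : Set (Fin d → Set ℝ) := {fun _ => Set.Ico (-1 : ℝ) 1}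

/-- `𝒦 := ⋃_{j ≥ 0} 𝒦_j`. -/
def rectKall {d : ℕ} (a : Fin d → ℝ) (β : ℝ) : Set (Fin d → Set ℝ) :=
  rectK0 d ∪ ⋃ (j : ℕ) (_ : 1 ≤ j), rectK a β j

/-- The volume `|R|` of a rectangle, the product of its side lengths. -/
def rVol {d : ℕ} (R : Fin d → Set ℝ) : ℝ := ∏ i, (volume (R i)).toReal

/-- The Euclidean norm on `ℝ^d`. -/
def euclNorm {d : ℕ} (x : Fin d → ℝ) : ℝ := Real.sqrt (∑ i, (x i) ^ 2)

/-- The anisotropic dilation `t^{-a} x`. -/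
def aDilNeg {d : ℕ} (a : Fin d → ℝ) (t : ℝ) (x : Fin d → ℝ) : Fin d → ℝ :=
  fun i => t ^ (-(a i)) * x i

/-- `nrm` is the anisotropic quasi-norm `|·|_a`. -/
def IsAnisoNorm {d : ℕ} (a : Fin d → ℝ) (nrm : (Fin d → ℝ) → ℝ) : Prop :=
  nrm 0 = 0 ∧ ∀ x : Fin d → ℝ, x ≠ 0 → 0 < nrm x ∧ euclNorm (aDilNeg a (nrm x) x) = 1

/-! ### Auxiliary lemmas -/

section Aux

variable {a β : ℝ} {j : ℕ}

lemma jr_one (hj : 1 ≤ j) : (1 : ℝ) ≤ (j : ℝ) := by exact_mod_cast hj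

lemma jr_pos (hj : 1 ≤ j) : (0 : ℝ) < (j : ℝ) := lt_of_lt_of_le zero_lt_one (jr_one hj)

lemma mIn_lb : (j : ℝ) ^ a ≤ ((mIn a j : ℤ) : ℝ) := Int.le_ceil _

lemma one_le_jpow (ha : 0 ≤ a) (hj : 1 ≤ j) : (1 : ℝ) ≤ (j : ℝ) ^ a :=
  Real.one_le_rpow (jr_one hj) ha

lemma mIn_ub (ha : 1 ≤ a) (hj : 1 ≤ j) : ((mIn a j : ℤ) : ℝ) ≤ 2 * (j : ℝ) ^ a := by
  have h1 : (1 : ℝ) ≤ (j : ℝ) ^ a := one_le_jpow (le_trans zero_le_one ha) hj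
  have := Int.ceil_lt_add_one ((j : ℝ) ^ a)
  have : ((mIn a j : ℤ) : ℝ) < (j : ℝ) ^ a + 1 := this
  linarith

lemma mIn_pos' (ha : 1 ≤ a) (hj : 1 ≤ j) : (0 : ℝ) < ((mIn a j : ℤ) : ℝ) :=
  lt_of_lt_of_le zero_lt_one (le_trans (one_le_jpow (le_trans zero_le_one ha) hj) mIn_lb)

lemma mOut_lb : (j : ℝ) ^ (a - 1) ≤ ((mOut a j : ℤ) : ℝ) := Int.le_ceil _

lemma mOut_ub (ha : 1 ≤ a) (hj : 1 ≤ j) : ((mOut a j : ℤ) : ℝ) ≤ 2 * (j : ℝ) ^ (a - 1) := by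
  have h1 : (1 : ℝ) ≤ (j : ℝ) ^ (a - 1) := one_le_jpow (by linarith) hj
  have : ((mOut a j : ℤ) : ℝ) < (j : ℝ) ^ (a - 1) + 1 := Int.ceil_lt_add_one _
  linarith

lemma mOut_pos' (ha : 1 ≤ a) (hj : 1 ≤ j) : (0 : ℝ) < ((mOut a j : ℤ) : ℝ) :=
  lt_of_lt_of_le zero_lt_one (le_trans (one_le_jpow (by linarith) hj) mOut_lb)

lemma mOut_pos (ha : 1 ≤ a) (hj : 1 ≤ j) : 0 < mOut a j := by
  exact_mod_cast mOut_pos' (a := a) (j := j) ha hj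

lemma mIn_pos (ha : 1 ≤ a) (hj : 1 ≤ j) : 0 < mIn a j := by
  exact_mod_cast mIn_pos' (a := a) (j := j) ha hj

/-- Lower bound for the inner length. -/
lemma lenI_lb (ha : 1 ≤ a) (hβ : 1 ≤ β) (hj : 1 ≤ j) :
    (j : ℝ) ^ (a * β - a) ≤ lenI a β j := by
  have hjp := jr_pos hj
  have hmp := mIn_pos' (a := a) (j := j) ha hj
  have hub := mIn_ub (a := a) (j := j) ha hj
  have hpow : (0 : ℝ) < (j : ℝ) ^ a := Real.rpow_pos_of_pos hjp a
  unfold lenI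
  rw [Real.rpow_sub hjp, div_le_div_iff₀ hpow hmp]
  calc (j:ℝ) ^ (a * β) * ((mIn a j : ℤ) : ℝ) ≤ (j:ℝ) ^ (a * β) * (2 * (j:ℝ) ^ a) :=
        mul_le_mul_of_nonneg_left hub (le_of_lt (Real.rpow_pos_of_pos hjp _))
    _ = 2 * (j:ℝ) ^ (a * β) * (j:ℝ) ^ a := by ring

lemma lenI_ub (ha : 1 ≤ a) (hβ : 1 ≤ β) (hj : 1 ≤ j) :
    lenI a β j ≤ 2 * (j : ℝ) ^ (a * β - a) := by
  have hjp := jr_pos hj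
  have hmp := mIn_pos' (a := a) (j := j) ha hj
  have hpow : (0 : ℝ) < (j : ℝ) ^ a := Real.rpow_pos_of_pos hjp a
  unfold lenI
  rw [Real.rpow_sub hjp, ← mul_div_assoc, div_le_div_iff₀ hmp hpow]
  exact mul_le_mul_of_nonneg_left mIn_lb (by positivity)

/-- Lower bound for the increment `(j+1)^s − j^s ≥ (j+1)^{s−1}`. -/
lemma incr_lb {s : ℝ} (hs : 1 ≤ s) (hj : 1 ≤ j) :
    ((j : ℝ) + 1) ^ (s - 1) ≤ ((j : ℝ) + 1) ^ s - (j : ℝ) ^ s := by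
  have hjp := jr_pos hj
  have hj1 : (0 : ℝ) < (j : ℝ) + 1 := by linarith
  have h1 : ((j : ℝ) + 1) ^ s = ((j : ℝ) + 1) ^ (s - 1) * ((j : ℝ) + 1) := by
    rw [← Real.rpow_add_one (ne_of_gt hj1)]; ring_nf
  have h2 : (j : ℝ) ^ s = (j : ℝ) ^ (s - 1) * (j : ℝ) := by
    rw [← Real.rpow_add_one (ne_of_gt hjp)]; ring_nf
  have h3 : (j : ℝ) ^ (s - 1) ≤ ((j : ℝ) + 1) ^ (s - 1) :=
    Real.rpow_le_rpow (le_of_lt hjp) (by linarith) (by linarith)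
  have h4 : (j : ℝ) ^ (s-1) * (j:ℝ) ≤ ((j : ℝ)+1) ^ (s-1) * (j:ℝ) :=
    mul_le_mul_of_nonneg_right h3 (le_of_lt hjp)
  rw [h1, h2]; nlinarith

/-- Upper bound for the increment: `(j+1)^s − j^s ≤ s (j+1)^{s−1}` (Bernoulli). -/
lemma incr_ub {s : ℝ} (hs : 1 ≤ s) (hj : 1 ≤ j) :
    ((j : ℝ) + 1) ^ s - (j : ℝ) ^ s ≤ s * ((j : ℝ) + 1) ^ (s - 1) := by
  have hjp := jr_pos hj
  have hj1 : (0 : ℝ) < (j : ℝ) + 1 := by linarith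
  -- Bernoulli with 1 + t = j/(j+1), t = -1/(j+1)
  have ht : (-1 : ℝ) ≤ -1 / ((j:ℝ)+1) := by
    rw [neg_div]
    have : 1 / ((j:ℝ)+1) ≤ 1 := by
      rw [div_le_one hj1]; linarith
    linarith
  have hb := one_add_mul_self_le_rpow_one_add ht hs
  have hu : (1 : ℝ) + -1/((j:ℝ)+1) = (j:ℝ)/((j:ℝ)+1) := by
    field_simp; ring
  rw [hu] at hb
  have hdiv : ((j:ℝ)/((j:ℝ)+1)) ^ s = (j:ℝ)^s / ((j:ℝ)+1)^s := by
    rw [Real.div_rpow (le_of_lt hjp) (le_of_lt hj1)]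
  rw [hdiv] at hb
  -- hb : 1 + s * (-1/(j+1)) ≤ j^s / (j+1)^s
  have hp : (0 : ℝ) < ((j:ℝ)+1) ^ s := Real.rpow_pos_of_pos hj1 s
  have hb2 : (1 + s * (-1/((j:ℝ)+1))) * ((j:ℝ)+1)^s ≤ (j:ℝ)^s := by
    rw [← le_div_iff₀ hp]; exact hb
  have hkey : ((j:ℝ)+1)^s - s * (((j:ℝ)+1)^s / ((j:ℝ)+1)) ≤ (j:ℝ)^s := by
    calc ((j:ℝ)+1)^s - s * (((j:ℝ)+1)^s / ((j:ℝ)+1))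
        = (1 + s * (-1/((j:ℝ)+1))) * ((j:ℝ)+1)^s := by field_simp; ring
      _ ≤ (j:ℝ)^s := hb2
  have hdd : ((j:ℝ)+1)^s / ((j:ℝ)+1) = ((j:ℝ)+1) ^ (s - 1) := by
    rw [Real.rpow_sub hj1, Real.rpow_one]
  rw [hdd] at hkey
  linarith

lemma one_le_ab (ha : 1 ≤ a) (hβ : 1 ≤ β) : 1 ≤ a * β := by nlinarith

lemma lenO_lb (ha : 1 ≤ a) (hβ : 1 ≤ β) (hj : 1 ≤ j) :
    (j : ℝ) ^ (a * β - a) / 2 ≤ lenO a β j := by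
  have hjp := jr_pos hj
  have hs : 1 ≤ a * β := one_le_ab ha hβ
  have hm := mOut_pos' (a := a) (j := j) ha hj
  have hmu := mOut_ub (a := a) (j := j) ha hj
  have hN : (j : ℝ) ^ (a * β - 1) ≤ ((j:ℝ)+1) ^ (a*β) - (j:ℝ) ^ (a*β) := by
    refine le_trans ?_ (incr_lb hs hj)
    exact Real.rpow_le_rpow (le_of_lt hjp) (by linarith) (by linarith)
  unfold lenO
  rw [div_le_div_iff₀ (by norm_num : (0:ℝ) < 2) hm]
  have hpow : (0:ℝ) ≤ (j:ℝ) ^ (a*β - a) := le_of_lt (Real.rpow_pos_of_pos hjp _)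
  calc (j:ℝ) ^ (a*β - a) * ((mOut a j : ℤ):ℝ) ≤ (j:ℝ) ^ (a*β - a) * (2 * (j:ℝ) ^ (a-1)) :=
        mul_le_mul_of_nonneg_left hmu hpow
    _ = 2 * ((j:ℝ) ^ (a*β - a) * (j:ℝ) ^ (a-1)) := by ring
    _ = 2 * (j:ℝ) ^ (a*β - 1) := by
        rw [← Real.rpow_add hjp]; ring_nf
    _ ≤ (((j:ℝ)+1) ^ (a*β) - (j:ℝ) ^ (a*β)) * 2 := by linarith
lemma lenO_ub (ha : 1 ≤ a) (hβ : 1 ≤ β) (hj : 1 ≤ j) :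
    lenO a β j ≤ (a * β) * 2 ^ (a * β) * (j : ℝ) ^ (a * β - a) := by
  have hjp := jr_pos hj
  have hs : 1 ≤ a * β := one_le_ab ha hβ
  have hm := mOut_pos' (a := a) (j := j) ha hj
  have hml := mOut_lb (a := a) (j := j)
  have hN : ((j:ℝ)+1) ^ (a*β) - (j:ℝ) ^ (a*β) ≤ (a*β) * 2 ^ (a*β) * (j:ℝ) ^ (a*β - 1) := by
    refine le_trans (incr_ub hs hj) ?_
    have h1j := jr_one hj
    have h2j : ((j:ℝ)+1) ^ (a*β-1) ≤ (2*(j:ℝ)) ^ (a*β-1) := by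
      refine Real.rpow_le_rpow (by linarith) (by linarith) (by linarith)
    have hmul : ((2:ℝ)*(j:ℝ)) ^ (a*β-1) = 2 ^ (a*β-1) * (j:ℝ) ^ (a*β-1) :=
      Real.mul_rpow (by norm_num) (le_of_lt hjp)
    have h2e : (2:ℝ) ^ (a*β-1) ≤ 2 ^ (a*β) :=
      Real.rpow_le_rpow_of_exponent_le (by norm_num) (by linarith)
    have hjn : (0:ℝ) ≤ (j:ℝ) ^ (a*β-1) := le_of_lt (Real.rpow_pos_of_pos hjp _)
    have : ((j:ℝ)+1) ^ (a*β-1) ≤ 2 ^ (a*β) * (j:ℝ) ^ (a*β-1) := by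
      refine le_trans h2j ?_
      rw [hmul]
      exact mul_le_mul_of_nonneg_right h2e hjn
    calc (a*β) * ((j:ℝ)+1) ^ (a*β-1) ≤ (a*β) * (2 ^ (a*β) * (j:ℝ) ^ (a*β-1)) :=
          mul_le_mul_of_nonneg_left this (by linarith)
      _ = (a*β) * 2 ^ (a*β) * (j:ℝ) ^ (a*β-1) := by ring
  unfold lenO
  rw [div_le_iff₀ hm]
  refine le_trans hN ?_
  have hjg : (j:ℝ) ^ (a*β-1) = (j:ℝ) ^ (a*β-a) * (j:ℝ) ^ (a-1) := by
    rw [← Real.rpow_add hjp]; ring_nf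
  have hc : (0:ℝ) ≤ (a*β) * 2 ^ (a*β) * (j:ℝ) ^ (a*β-a) := by positivity
  calc (a*β) * 2 ^ (a*β) * (j:ℝ) ^ (a*β-1)
      = ((a*β) * 2 ^ (a*β) * (j:ℝ) ^ (a*β-a)) * (j:ℝ) ^ (a-1) := by rw [hjg]; ring
    _ ≤ ((a*β) * 2 ^ (a*β) * (j:ℝ) ^ (a*β-a)) * ((mOut a j : ℤ):ℝ) :=
        mul_le_mul_of_nonneg_left hml hc

lemma lenO_pos (ha : 1 ≤ a) (hβ : 1 ≤ β) (hj : 1 ≤ j) : 0 < lenO a β j :=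
  lt_of_lt_of_le (by positivity) (lenO_lb ha hβ hj)

lemma lenI_pos (ha : 1 ≤ a) (hβ : 1 ≤ β) (hj : 1 ≤ j) : 0 < lenI a β j :=
  lt_of_lt_of_le (Real.rpow_pos_of_pos (jr_pos hj) _) (lenI_lb ha hβ hj)

lemma mOut_mul_lenO (ha : 1 ≤ a) (hβ : 1 ≤ β) (hj : 1 ≤ j) :
    ((mOut a j : ℤ) : ℝ) * lenO a β j = ((j:ℝ)+1) ^ (a*β) - (j:ℝ) ^ (a*β) := by
  unfold lenO
  rw [mul_div_cancel₀]
  exact ne_of_gt (mOut_pos' ha hj)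

lemma mIn_mul_lenI (ha : 1 ≤ a) (hβ : 1 ≤ β) (hj : 1 ≤ j) :
    ((mIn a j : ℤ) : ℝ) * lenI a β j = 2 * (j:ℝ) ^ (a*β) := by
  unfold lenI
  rw [mul_div_cancel₀]
  exact ne_of_gt (mIn_pos' ha hj)

lemma knot_succ_sub_inner (ha : 1 ≤ a) (hβ : 1 ≤ β) (hj : 1 ≤ j) {k : ℤ}
    (hin : isInnerIdx a j k) :
    knot a β j (k+1) - knot a β j k = lenI a β j := by
  obtain ⟨h1, h2⟩ := hin
  have hOL := mOut_mul_lenO (a := a) (β := β) ha hβ hj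
  unfold knot
  by_cases hB : k ≤ mOut a j
  · -- k = mOut
    have hk : k = mOut a j := le_antisymm hB h1
    have hmI := mIn_pos (a := a) (j := j) ha hj
    rw [if_neg (by omega), if_pos (by omega), if_pos hB, hk]
    push_cast
    ring_nf
    ring_nf at hOL
    linarith [hOL]
  · rw [if_neg (by omega), if_pos (by omega), if_neg hB, if_pos (by omega)]
    push_cast
    ring

lemma knot_succ_sub_outer (ha : 1 ≤ a) (hβ : 1 ≤ β) (hj : 1 ≤ j) {k : ℤ}
    (hk0 : 0 ≤ k) (hk1 : k < numIv a j) (hout : ¬ isInnerIdx a j k) :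
    knot a β j (k+1) - knot a β j k = lenO a β j := by
  have hmI := mIn_pos (a := a) (j := j) ha hj
  have hmO := mOut_pos (a := a) (j := j) ha hj
  have hIL := mIn_mul_lenI (a := a) (β := β) ha hβ hj
  unfold numIv at hk1
  unfold isInnerIdx at hout
  push_neg at hout
  unfold knot
  by_cases hA : k + 1 ≤ mOut a j
  · rw [if_pos hA, if_pos (by omega)]
    push_cast; ring
  · have h1 : mOut a j + mIn a j ≤ k := by
      rcases lt_or_ge k (mOut a j) with h | h
      · omega
      · exact hout h
    by_cases hD : k ≤ mOut a j + mIn a j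
    · -- k = mOut + mIn
      have hk : k = mOut a j + mIn a j := le_antisymm hD h1
      rw [if_neg (by omega), if_neg (by omega), if_neg (by omega), if_pos hD, hk]
      push_cast
      ring_nf
      ring_nf at hIL
      linarith [hIL]
    · rw [if_neg (by omega), if_neg (by omega), if_neg (by omega), if_neg hD]
      push_cast; ring

lemma knot_le_neg (ha : 1 ≤ a) (hβ : 1 ≤ β) (hj : 1 ≤ j) {k : ℤ}
    (hk0 : 0 ≤ k) (hk : k ≤ mOut a j) :
    knot a β j k ≤ -(j:ℝ) ^ (a*β) := by
  have hOL := mOut_mul_lenO (a := a) (β := β) ha hβ hj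
  have hlen := lenO_pos (a := a) (β := β) (j := j) ha hβ hj
  unfold knot
  rw [if_pos hk]
  have : ((k:ℤ):ℝ) * lenO a β j ≤ ((mOut a j : ℤ):ℝ) * lenO a β j := by
    apply mul_le_mul_of_nonneg_right _ (le_of_lt hlen)
    exact_mod_cast hk
  linarith

lemma knot_ge_pos (ha : 1 ≤ a) (hβ : 1 ≤ β) (hj : 1 ≤ j) {k : ℤ}
    (hk : mOut a j + mIn a j ≤ k) (hk1 : k ≤ numIv a j) :
    (j:ℝ) ^ (a*β) ≤ knot a β j k := by
  have hIL := mIn_mul_lenI (a := a) (β := β) ha hβ hj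
  have hmI := mIn_pos (a := a) (j := j) ha hj
  have hlenO := lenO_pos (a := a) (β := β) (j := j) ha hβ hj
  unfold knot
  by_cases hD : k ≤ mOut a j + mIn a j
  · have hk' : k = mOut a j + mIn a j := le_antisymm hD hk
    rw [if_neg (by omega), if_pos hD, hk']
    push_cast
    ring_nf
    ring_nf at hIL
    linarith
  · rw [if_neg (by omega), if_neg hD]
    have : (0:ℝ) ≤ ((k - mOut a j - mIn a j : ℤ):ℝ) * lenO a β j := by
      apply mul_nonneg _ (le_of_lt hlenO)
      have : (0:ℤ) ≤ k - mOut a j - mIn a j := by omega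
      exact_mod_cast this
    linarith

lemma knot_mem_bounds (ha : 1 ≤ a) (hβ : 1 ≤ β) (hj : 1 ≤ j) {k : ℤ}
    (hk0 : 0 ≤ k) (hk1 : k ≤ numIv a j) :
    -(((j:ℝ)+1) ^ (a*β)) ≤ knot a β j k ∧ knot a β j k ≤ ((j:ℝ)+1) ^ (a*β) := by
  have hOL := mOut_mul_lenO (a := a) (β := β) ha hβ hj
  have hIL := mIn_mul_lenI (a := a) (β := β) ha hβ hj
  have hlenO := lenO_pos (a := a) (β := β) (j := j) ha hβ hj
  have hlenI := lenI_pos (a := a) (β := β) (j := j) ha hβ hj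
  have hmO := mOut_pos (a := a) (j := j) ha hj
  have hmI := mIn_pos (a := a) (j := j) ha hj
  have hjp := jr_pos hj
  have hjs : (0:ℝ) < (j:ℝ) ^ (a*β) := Real.rpow_pos_of_pos hjp _
  have hjs1 : (j:ℝ) ^ (a*β) ≤ ((j:ℝ)+1) ^ (a*β) := by
    apply Real.rpow_le_rpow (le_of_lt hjp) (by linarith)
    nlinarith
  unfold knot numIv at *
  by_cases hA : k ≤ mOut a j
  · rw [if_pos hA]
    constructor
    · have : (0:ℝ) ≤ ((k:ℤ):ℝ) * lenO a β j :=
        mul_nonneg (by exact_mod_cast hk0) (le_of_lt hlenO)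
      linarith
    · have : ((k:ℤ):ℝ) * lenO a β j ≤ ((mOut a j : ℤ):ℝ) * lenO a β j := by
        apply mul_le_mul_of_nonneg_right _ (le_of_lt hlenO)
        exact_mod_cast hA
      linarith
  · by_cases hB : k ≤ mOut a j + mIn a j
    · rw [if_neg hA, if_pos hB]
      have hlow : (0:ℝ) ≤ ((k - mOut a j : ℤ):ℝ) * lenI a β j := by
        apply mul_nonneg _ (le_of_lt hlenI)
        have : (0:ℤ) ≤ k - mOut a j := by omega
        exact_mod_cast this
      have hhigh : ((k - mOut a j : ℤ):ℝ) * lenI a β j ≤ ((mIn a j : ℤ):ℝ) * lenI a β j := by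
        apply mul_le_mul_of_nonneg_right _ (le_of_lt hlenI)
        have : k - mOut a j ≤ mIn a j := by omega
        exact_mod_cast this
      constructor <;> [linarith; linarith]
    · rw [if_neg hA, if_neg hB]
      have hlow : (0:ℝ) ≤ ((k - mOut a j - mIn a j : ℤ):ℝ) * lenO a β j := by
        apply mul_nonneg _ (le_of_lt hlenO)
        have : (0:ℤ) ≤ k - mOut a j - mIn a j := by omega
        exact_mod_cast this
      have hhigh : ((k - mOut a j - mIn a j : ℤ):ℝ) * lenO a β j
          ≤ ((mOut a j : ℤ):ℝ) * lenO a β j := by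
        apply mul_le_mul_of_nonneg_right _ (le_of_lt hlenO)
        have : k - mOut a j - mIn a j ≤ mOut a j := by omega
        exact_mod_cast this
      constructor <;> [linarith; linarith]

/-- Location of points of an interval of the partition. -/
lemma mem_ivl_abs_ub (ha : 1 ≤ a) (hβ : 1 ≤ β) (hj : 1 ≤ j) {k : ℤ} {x : ℝ}
    (hk0 : 0 ≤ k) (hk1 : k < numIv a j) (hx : x ∈ ivl a β j k) :
    |x| ≤ ((j:ℝ)+1) ^ (a*β) := by
  obtain ⟨hx1, hx2⟩ := hx
  have h1 := (knot_mem_bounds (a := a) (β := β) ha hβ hj hk0 (le_of_lt hk1)).1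
  have h2 := (knot_mem_bounds (a := a) (β := β) ha hβ hj
    (by omega : (0:ℤ) ≤ k + 1) (by omega : k + 1 ≤ numIv a j)).2
  rw [abs_le]
  constructor <;> linarith

lemma mem_ivl_abs_lb (ha : 1 ≤ a) (hβ : 1 ≤ β) (hj : 1 ≤ j) {k : ℤ} {x : ℝ}
    (hk0 : 0 ≤ k) (hk1 : k < numIv a j) (hout : ¬ isInnerIdx a j k) (hx : x ∈ ivl a β j k) :
    (j:ℝ) ^ (a*β) ≤ |x| := by
  obtain ⟨hx1, hx2⟩ := hx
  unfold isInnerIdx at hout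
  push_neg at hout
  rcases lt_or_ge k (mOut a j) with h | h
  · have := knot_le_neg (a := a) (β := β) ha hβ hj
      (by omega : (0:ℤ) ≤ k + 1) (by omega : k + 1 ≤ mOut a j)
    have hxneg : x < -(j:ℝ) ^ (a*β) := lt_of_lt_of_le hx2 this
    linarith [neg_le_abs x]
  · have h' := hout h
    have := knot_ge_pos (a := a) (β := β) ha hβ hj h' (le_of_lt hk1)
    calc (j:ℝ) ^ (a*β) ≤ knot a β j k := this
      _ ≤ x := hx1
      _ ≤ |x| := le_abs_self x

/-- Volume of an interval of the partition. -/
lemma ivl_vol_inner (ha : 1 ≤ a) (hβ : 1 ≤ β) (hj : 1 ≤ j) {k : ℤ}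
    (hin : isInnerIdx a j k) :
    (volume (ivl a β j k)).toReal = lenI a β j := by
  unfold ivl
  rw [Real.volume_Ico, ENNReal.toReal_ofReal]
  · exact knot_succ_sub_inner ha hβ hj hin
  · rw [knot_succ_sub_inner ha hβ hj hin]
    exact le_of_lt (lenI_pos ha hβ hj)

lemma ivl_vol_outer (ha : 1 ≤ a) (hβ : 1 ≤ β) (hj : 1 ≤ j) {k : ℤ}
    (hk0 : 0 ≤ k) (hk1 : k < numIv a j) (hout : ¬ isInnerIdx a j k) :
    (volume (ivl a β j k)).toReal = lenO a β j := by
  unfold ivl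
  rw [Real.volume_Ico, ENNReal.toReal_ofReal]
  · exact knot_succ_sub_outer ha hβ hj hk0 hk1 hout
  · rw [knot_succ_sub_outer ha hβ hj hk0 hk1 hout]
    exact le_of_lt (lenO_pos ha hβ hj)

end Aux

/-- Helper: `(y^{cβ})^{1/c} = y^β`. -/
lemma rpow_ab_inv {y c β' : ℝ} (hy : 0 ≤ y) (hc : c ≠ 0) : (y ^ (c * β')) ^ (1/c) = y ^ β' := by
  rw [← Real.rpow_mul hy]
  congr 1
  field_simp

/-- Comparison of an anisotropic quasi-norm with the coordinatewise quantities. -/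
lemma aniso_cmp {n : ℕ} (a : Fin n → ℝ) (ha : ∀ i, 1 ≤ a i) (nrm : (Fin n → ℝ) → ℝ)
    (h : IsAnisoNorm a nrm) (x : Fin n → ℝ) (hx : x ≠ 0) :
    (∀ i, |x i| ^ (1 / a i) ≤ nrm x) ∧
      ∃ i, nrm x ≤ Real.sqrt n * |x i| ^ (1 / a i) := by
  obtain ⟨-, hpt⟩ := h
  obtain ⟨ht, he⟩ := hpt x hx
  have hsum : ∑ i, (nrm x ^ (-(a i)) * x i) ^ 2 = 1 := by
    unfold euclNorm aDilNeg at he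
    rwa [Real.sqrt_eq_one] at he
  have hnpos : 0 < n := by
    by_contra hn
    push_neg at hn
    obtain rfl : n = 0 := Nat.le_zero.mp hn
    rw [Finset.univ_eq_empty, Finset.sum_empty] at hsum
    exact absurd hsum zero_ne_one
  have hterm : ∀ i, (nrm x ^ (-(a i)) * x i) ^ 2 ≤ 1 := by
    intro i
    rw [← hsum]
    exact Finset.single_le_sum (f := fun i => (nrm x ^ (-(a i)) * x i) ^ 2)
      (fun i _ => sq_nonneg _) (Finset.mem_univ i)
  have hapos : ∀ i, (0:ℝ) < a i := fun i => lt_of_lt_of_le one_pos (ha i)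
  have hane : ∀ i, a i ≠ 0 := fun i => ne_of_gt (hapos i)
  constructor
  · intro i
    have h1 : |nrm x ^ (-(a i)) * x i| ≤ 1 := (sq_le_one_iff_abs_le_one _).mp (hterm i)
    have htp : (0:ℝ) < nrm x ^ (-(a i)) := Real.rpow_pos_of_pos ht _
    rw [abs_mul, abs_of_pos htp] at h1
    have hta : (0:ℝ) < nrm x ^ (a i) := Real.rpow_pos_of_pos ht _
    have hid : nrm x ^ (-(a i)) * nrm x ^ (a i) = 1 := by
      rw [← Real.rpow_add ht]; simp
    have h2 : |x i| ≤ nrm x ^ (a i) := by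
      nlinarith [mul_le_mul_of_nonneg_right h1 (le_of_lt hta)]
    calc |x i| ^ (1 / a i) ≤ (nrm x ^ (a i)) ^ (1 / a i) :=
          Real.rpow_le_rpow (abs_nonneg _) h2 (one_div_nonneg.mpr (hapos i).le)
      _ = nrm x ^ ((1:ℝ)) := by
          rw [← Real.rpow_mul (le_of_lt ht)]
          rw [mul_one_div, div_self (hane i)]
      _ = nrm x := Real.rpow_one _
  · have hn : ∃ i, (1:ℝ)/n ≤ (nrm x ^ (-(a i)) * x i) ^ 2 := by
      by_contra hcon
      push_neg at hcon
      have : Nonempty (Fin n) := Fin.pos_iff_nonempty.mp hnpos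
      have hne : (Finset.univ : Finset (Fin n)).Nonempty := Finset.univ_nonempty
      have hlt : ∑ i, (nrm x ^ (-(a i)) * x i) ^ 2 < ∑ _i : Fin n, (1:ℝ)/n :=
        Finset.sum_lt_sum_of_nonempty hne (fun i _ => hcon i)
      rw [hsum, Finset.sum_const, Finset.card_univ, Fintype.card_fin, nsmul_eq_mul] at hlt
      have hn0 : (0:ℝ) < (n:ℝ) := by exact_mod_cast hnpos
      rw [mul_one_div, div_self (ne_of_gt hn0)] at hlt
      exact lt_irrefl _ hlt
    obtain ⟨i, hi⟩ := hn
    refine ⟨i, ?_⟩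
    have hn0 : (0:ℝ) < (n:ℝ) := by exact_mod_cast hnpos
    have hs0 : (0:ℝ) < Real.sqrt n := Real.sqrt_pos.mpr hn0
    have hs1 : (1:ℝ) ≤ Real.sqrt n := by
      rw [show (1:ℝ) = Real.sqrt 1 by simp]
      exact Real.sqrt_le_sqrt (by exact_mod_cast hnpos)
    have htp : (0:ℝ) < nrm x ^ (-(a i)) := Real.rpow_pos_of_pos ht _
    have hta : (0:ℝ) < nrm x ^ (a i) := Real.rpow_pos_of_pos ht _
    have hid : nrm x ^ (-(a i)) * nrm x ^ (a i) = 1 := by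
      rw [← Real.rpow_add ht]; simp
    -- 1/√n ≤ t^{-a i} |x i|
    have h1 : 1 / Real.sqrt n ≤ nrm x ^ (-(a i)) * |x i| := by
      have := Real.sqrt_le_sqrt hi
      rw [Real.sqrt_sq_eq_abs, abs_mul, abs_of_pos htp] at this
      calc 1 / Real.sqrt n = Real.sqrt (1/n) := by
            rw [one_div, one_div, Real.sqrt_inv]
        _ ≤ _ := this
    -- t^{a i} ≤ √n |x i|
    have h2 : nrm x ^ (a i) ≤ Real.sqrt n * |x i| := by
      have h3 := mul_le_mul_of_nonneg_right h1 (le_of_lt hta)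
      have h4 : nrm x ^ (-(a i)) * |x i| * nrm x ^ (a i) = |x i| := by
        linear_combination |x i| * hid
      rw [h4, div_mul_eq_mul_div, one_mul, div_le_iff₀ hs0] at h3
      nlinarith [h3, abs_nonneg (x i)]
    -- conclude
    have h5 : nrm x ≤ (Real.sqrt n * |x i|) ^ (1 / a i) := by
      calc nrm x = (nrm x ^ (a i)) ^ (1 / a i) := by
            rw [← Real.rpow_mul (le_of_lt ht)]
            rw [mul_one_div, div_self (hane i), Real.rpow_one]
        _ ≤ _ := Real.rpow_le_rpow (le_of_lt hta) h2 (one_div_nonneg.mpr (hapos i).le)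
    have h6 : (Real.sqrt n * |x i|) ^ (1 / a i)
        = Real.sqrt n ^ (1/ a i) * |x i| ^ (1 / a i) :=
      Real.mul_rpow (le_of_lt hs0) (abs_nonneg _)
    have h7 : Real.sqrt n ^ (1 / a i) ≤ Real.sqrt n := by
      nth_rewrite 2 [show Real.sqrt n = Real.sqrt n ^ (1:ℝ) by rw [Real.rpow_one]]
      apply Real.rpow_le_rpow_of_exponent_le hs1
      rw [div_le_one (lt_of_lt_of_le one_pos (ha i))]
      exact ha i
    calc nrm x ≤ Real.sqrt n ^ (1/ a i) * |x i| ^ (1 / a i) := by rw [← h6]; exact h5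
      _ ≤ Real.sqrt n * |x i| ^ (1 / a i) :=
          mul_le_mul_of_nonneg_right h7 (Real.rpow_nonneg (abs_nonneg _) _)

/-- Two-sided bounds for `T^q` given two-sided bounds for `T`. -/
lemma q_bounds {j q β E T s : ℝ} (hj : 1 ≤ j) (hq : 0 ≤ q) (hβ : 0 ≤ β) (hE : β * q = E)
    (hs : 1 ≤ s) (hT₁ : j ^ β ≤ T) (hT₂ : T ≤ s * (2*j) ^ β) :
    j ^ E ≤ T ^ q ∧ T ^ q ≤ (s ^ q * 2 ^ E) * j ^ E := by
  have hj0 : 0 < j := lt_of_lt_of_le one_pos hj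
  have hjb : 0 < j ^ β := Real.rpow_pos_of_pos hj0 _
  have h2j : (0:ℝ) ≤ 2*j := by linarith
  constructor
  · calc j ^ E = (j ^ β) ^ q := by rw [← Real.rpow_mul hj0.le, hE]
      _ ≤ T ^ q := Real.rpow_le_rpow hjb.le hT₁ hq
  · calc T ^ q ≤ (s * (2*j) ^ β) ^ q :=
        Real.rpow_le_rpow (le_trans hjb.le hT₁) hT₂ hq
      _ = s ^ q * ((2*j) ^ β) ^ q :=
        Real.mul_rpow (by linarith) (Real.rpow_nonneg h2j _)
      _ = s ^ q * (2*j) ^ E := by rw [← Real.rpow_mul h2j, hE]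
      _ = s ^ q * (2 ^ E * j ^ E) := by
        rw [Real.mul_rpow (by norm_num) hj0.le]
      _ = (s ^ q * 2 ^ E) * j ^ E := by ring

/-- Glue: from `P`-comparability of `V` and `Q` deduce the two-sided estimate. -/
lemma bracket {P V Q v₂ m : ℝ} (d : ℕ) (hP : 0 < P) (hv₂ : 1 ≤ v₂) (hm : 1 ≤ m)
    (hV₁ : (1/2:ℝ)^d * P ≤ V) (hV₂ : V ≤ v₂ * P) (hQ₁ : P ≤ Q) (hQ₂ : Q ≤ m * P) :
    (1/v₂) * V ≤ Q ∧ Q ≤ (m * 2^d) * V := by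
  have hv₂0 : 0 < v₂ := lt_of_lt_of_le one_pos hv₂
  constructor
  · calc (1/v₂) * V ≤ (1/v₂) * (v₂ * P) :=
        mul_le_mul_of_nonneg_left hV₂ (by positivity)
      _ = P := by field_simp
      _ ≤ Q := hQ₁
  · have h2d : ((1:ℝ)/2)^d * (2:ℝ)^d = 1 := by
      rw [← mul_pow]; norm_num
    calc Q ≤ m * P := hQ₂
      _ = (m * 2^d) * ((1/2)^d * P) := by
          rw [show (m * 2^d) * ((1/2:ℝ)^d * P) = m * P * ((1/2:ℝ)^d * (2:ℝ)^d) by ring, h2d,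
            mul_one]
      _ ≤ (m * 2^d) * V := mul_le_mul_of_nonneg_left hV₁ (by positivity)

/-- Key geometric facts: volume comparability and coordinate bounds. -/
lemma key_facts {d : ℕ} (a : Fin d → ℝ) (ha : ∀ i, 1 ≤ a i) {β : ℝ} (hβ : 1 ≤ β)
    {j : ℕ} (hj : 1 ≤ j) {R : Fin d → Set ℝ} (hR : R ∈ rectK a β j)
    {x : Fin d → ℝ} (hx : ∀ i, x i ∈ R i) :
    ((1/2:ℝ)^d * (j:ℝ) ^ (∑ i, (a i * β - a i)) ≤ rVol R ∧
      rVol R ≤ (∏ i, (2 + (a i * β) * 2 ^ (a i * β))) * (j:ℝ) ^ (∑ i, (a i * β - a i))) ∧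
    (∃ i, (j:ℝ) ^ β ≤ |x i| ^ (1 / a i)) ∧
    (∀ i, |x i| ^ (1 / a i) ≤ (2 * (j:ℝ)) ^ β) := by
  obtain ⟨hA, hB⟩ := hR
  have hA' : ∀ i, ∃ k : ℤ, 0 ≤ k ∧ k < numIv (a i) j ∧ R i = ivl (a i) β j k := hA
  choose k hk0 hk1 hkeq using hA'
  have hout : ∃ i, ¬ isInnerIdx (a i) j (k i) := by
    by_contra hcon
    push_neg at hcon
    exact hB (fun i => ⟨k i, hcon i, hkeq i⟩)
  have hjp := jr_pos hj
  have hjr := jr_one hj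
  have hane : ∀ i, (0:ℝ) < a i := fun i => lt_of_lt_of_le one_pos (ha i)
  have hxmem : ∀ i, x i ∈ ivl (a i) β j (k i) := fun i => (hkeq i) ▸ (hx i)
  have hub : ∀ i, |x i| ≤ ((j:ℝ)+1) ^ (a i * β) :=
    fun i => mem_ivl_abs_ub (ha i) hβ hj (hk0 i) (hk1 i) (hxmem i)
  refine ⟨?_, ?_, ?_⟩
  · -- volume bounds
    have hlen : ∀ i : Fin d,
        (1/2:ℝ) * (j:ℝ) ^ (a i * β - a i) ≤ (volume (R i)).toReal ∧
        (volume (R i)).toReal ≤ (2 + (a i * β) * 2 ^ (a i * β)) * (j:ℝ) ^ (a i * β - a i) := by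
      intro i
      have hp : (0:ℝ) < (j:ℝ) ^ (a i * β - a i) := Real.rpow_pos_of_pos hjp _
      have hc0 : (0:ℝ) ≤ (a i * β) * 2 ^ (a i * β) := by
        have h1 : (0:ℝ) < a i * β := by nlinarith [ha i]
        positivity
      have hcp : (0:ℝ) ≤ (a i * β) * 2 ^ (a i * β) * (j:ℝ) ^ (a i * β - a i) :=
        mul_nonneg hc0 hp.le
      rw [hkeq i]
      by_cases hc : isInnerIdx (a i) j (k i)
      · rw [ivl_vol_inner (ha i) hβ hj hc]
        have l := lenI_lb (ha i) hβ hj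
        have u := lenI_ub (ha i) hβ hj
        constructor <;> nlinarith
      · rw [ivl_vol_outer (ha i) hβ hj (hk0 i) (hk1 i) hc]
        have l := lenO_lb (ha i) hβ hj
        have u := lenO_ub (ha i) hβ hj
        constructor <;> nlinarith
    have hprod : (j:ℝ) ^ (∑ i, (a i * β - a i)) = ∏ i, (j:ℝ) ^ (a i * β - a i) :=
      Real.rpow_sum_of_pos hjp _ _
    constructor
    · calc (1/2:ℝ)^d * (j:ℝ) ^ (∑ i, (a i * β - a i))
          = ∏ i : Fin d, ((1/2:ℝ) * (j:ℝ) ^ (a i * β - a i)) := by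
            rw [Finset.prod_mul_distrib, Finset.prod_const, Finset.card_univ,
              Fintype.card_fin, hprod]
        _ ≤ ∏ i, (volume (R i)).toReal := by
            apply Finset.prod_le_prod
            · intro i _
              positivity
            · intro i _
              exact (hlen i).1
        _ = rVol R := rfl
    · calc rVol R = ∏ i, (volume (R i)).toReal := rfl
        _ ≤ ∏ i : Fin d, ((2 + (a i * β) * 2 ^ (a i * β)) * (j:ℝ) ^ (a i * β - a i)) := by
            apply Finset.prod_le_prod
            · intro i _
              exact ENNReal.toReal_nonneg
            · intro i _
              exact (hlen i).2
        _ = (∏ i, (2 + (a i * β) * 2 ^ (a i * β))) * (j:ℝ) ^ (∑ i, (a i * β - a i)) := by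
            rw [Finset.prod_mul_distrib, hprod]
  · -- lower coordinate bound
    obtain ⟨i₀, hi₀⟩ := hout
    refine ⟨i₀, ?_⟩
    have hlb := mem_ivl_abs_lb (ha i₀) hβ hj (hk0 i₀) (hk1 i₀) hi₀ (hxmem i₀)
    calc (j:ℝ) ^ β = ((j:ℝ) ^ (a i₀ * β)) ^ (1 / a i₀) :=
          (rpow_ab_inv hjp.le (ne_of_gt (hane i₀))).symm
      _ ≤ |x i₀| ^ (1 / a i₀) :=
          Real.rpow_le_rpow (Real.rpow_nonneg hjp.le _) hlb (one_div_nonneg.mpr (hane i₀).le)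
  · -- upper coordinate bound
    intro i
    calc |x i| ^ (1 / a i) ≤ (((j:ℝ)+1) ^ (a i * β)) ^ (1 / a i) :=
          Real.rpow_le_rpow (abs_nonneg _) (hub i) (one_div_nonneg.mpr (hane i).le)
      _ = ((j:ℝ)+1) ^ β := rpow_ab_inv (by linarith) (ne_of_gt (hane i))
      _ ≤ (2 * (j:ℝ)) ^ β :=
          Real.rpow_le_rpow (by linarith) (by linarith) (by linarith)

/-- Lemma 3.1(d): with `β = 1/(1−α)`, for `x ∈ R ∈ 𝒦_j` (`j ≥ 1`) one has
`(|x|_{a,∞})^{να} ≍ |R|`, and likewise with `|x|_{a,∞}` replaced by `|x|_a` and by `⟨x⟩`. -/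
theorem stmt8 (d : ℕ) (hd : 1 ≤ d) (a : Fin d → ℝ) (ha : ∀ i, 1 ≤ a i)
    (α : ℝ) (hα0 : 0 ≤ α) (hα1 : α < 1)
    (nrm : (Fin d → ℝ) → ℝ) (hnrm : IsAnisoNorm a nrm)
    (nrmE : (Fin (d + 1) → ℝ) → ℝ) (hnrmE : IsAnisoNorm (Fin.cons 1 a) nrmE) :
    (∃ C₁ C₂ : ℝ, 0 < C₁ ∧ C₁ ≤ C₂ ∧ ∀ j : ℕ, 1 ≤ j → ∀ R ∈ rectK a (1 / (1 - α)) j,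
      ∀ x : Fin d → ℝ, (∀ i, x i ∈ R i) →
        C₁ * rVol R ≤ (⨆ i : Fin d, |x i| ^ (1 / a i)) ^ ((∑ i, a i) * α) ∧
          (⨆ i : Fin d, |x i| ^ (1 / a i)) ^ ((∑ i, a i) * α) ≤ C₂ * rVol R) ∧
    (∃ C₁ C₂ : ℝ, 0 < C₁ ∧ C₁ ≤ C₂ ∧ ∀ j : ℕ, 1 ≤ j → ∀ R ∈ rectK a (1 / (1 - α)) j,
      ∀ x : Fin d → ℝ, (∀ i, x i ∈ R i) →
        C₁ * rVol R ≤ nrm x ^ ((∑ i, a i) * α) ∧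
          nrm x ^ ((∑ i, a i) * α) ≤ C₂ * rVol R) ∧
    (∃ C₁ C₂ : ℝ, 0 < C₁ ∧ C₁ ≤ C₂ ∧ ∀ j : ℕ, 1 ≤ j → ∀ R ∈ rectK a (1 / (1 - α)) j,
      ∀ x : Fin d → ℝ, (∀ i, x i ∈ R i) →
        C₁ * rVol R ≤ nrmE (Fin.cons 1 x) ^ ((∑ i, a i) * α) ∧
          nrmE (Fin.cons 1 x) ^ ((∑ i, a i) * α) ≤ C₂ * rVol R) := by
  have h1α : 0 < 1 - α := by linarith
  set β := 1 / (1 - α) with hβdef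
  clear_value β
  have hβ1 : 1 ≤ β := by
    rw [hβdef, le_div_iff₀ h1α, one_mul]; linarith
  have hβ0 : 0 ≤ β := by linarith
  have hab : α * β = β - 1 := by
    rw [hβdef]; field_simp; ring
  have hν1 : 1 ≤ ∑ i, a i := by
    have h1 : (d:ℝ) = ∑ _i : Fin d, (1:ℝ) := by simp
    have h2 : ∑ _i : Fin d, (1:ℝ) ≤ ∑ i, a i := Finset.sum_le_sum (fun i _ => ha i)
    have h3 : (1:ℝ) ≤ (d:ℝ) := by exact_mod_cast hd
    linarith
  set ν := ∑ i, a i with hνdef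
  clear_value ν
  set q := ν * α with hqdef
  clear_value q
  set E := β * q with hEdef
  clear_value E
  have hq0 : 0 ≤ q := by rw [hqdef]; exact mul_nonneg (by linarith) hα0
  have hE0 : 0 ≤ E := by rw [hEdef]; exact mul_nonneg hβ0 hq0
  have hEsum : ∑ i, (a i * β - a i) = E := by
    rw [Finset.sum_sub_distrib, ← Finset.sum_mul, ← hνdef, hEdef, hqdef, hβdef]
    field_simp
    ring
  set CV := ∏ i, (2 + (a i * β) * 2 ^ (a i * β)) with hCVdef
  clear_value CV
  have hCV1 : 1 ≤ CV := by
    rw [hCVdef]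
    calc (1:ℝ) = ∏ _i : Fin d, (1:ℝ) := by simp
      _ ≤ ∏ i, (2 + (a i * β) * 2 ^ (a i * β)) := by
          apply Finset.prod_le_prod (fun i _ => zero_le_one)
          intro i _
          have h1 : (0:ℝ) < a i * β := by nlinarith [ha i]
          have h2 : (0:ℝ) ≤ (a i * β) * 2 ^ (a i * β) := by positivity
          linarith
  have hCV0 : 0 < CV := lt_of_lt_of_le one_pos hCV1
  have hC₁ : (0:ℝ) < 1/CV := one_div_pos.mpr hCV0
  have hC₁1 : 1/CV ≤ 1 := by rw [div_le_one hCV0]; exact hCV1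
  have h2d : (1:ℝ) ≤ (2:ℝ)^d := one_le_pow₀ one_le_two
  have h2E : (1:ℝ) ≤ (2:ℝ)^E := Real.one_le_rpow one_le_two hE0
  have hne : Nonempty (Fin d) := Fin.pos_iff_nonempty.mp hd
  refine ⟨?_, ?_, ?_⟩
  · -- Part 1: the sup quasi-norm
    have hm : (1:ℝ) ≤ (1:ℝ)^q * 2^E := by
      rw [Real.one_rpow, one_mul]; exact h2E
    refine ⟨1/CV, ((1:ℝ)^q * 2^E) * 2^d, hC₁, by nlinarith, ?_⟩
    intro j hj R hR x hx
    obtain ⟨⟨hV₁, hV₂⟩, ⟨i₁, hi₁⟩, hub⟩ := key_facts a ha hβ1 hj hR hx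
    rw [hEsum] at hV₁ hV₂
    rw [← hCVdef] at hV₂
    have hT₁ : (j:ℝ)^β ≤ ⨆ i, |x i| ^ (1/a i) :=
      le_ciSup_of_le (Set.Finite.bddAbove (Set.finite_range _)) i₁ hi₁
    have hT₂ : (⨆ i, |x i| ^ (1/a i)) ≤ 1 * (2*(j:ℝ))^β := by
      rw [one_mul]; exact ciSup_le hub
    obtain ⟨hQ₁, hQ₂⟩ := q_bounds (jr_one hj) hq0 hβ0 hEdef.symm le_rfl hT₁ hT₂
    exact bracket d (Real.rpow_pos_of_pos (jr_pos hj) E) hCV1 hm hV₁ hV₂ hQ₁ hQ₂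
  · -- Part 2: the anisotropic quasi-norm
    have hsd : (1:ℝ) ≤ Real.sqrt d := by
      rw [show (1:ℝ) = Real.sqrt 1 by simp]
      exact Real.sqrt_le_sqrt (by exact_mod_cast hd)
    have hsq : (1:ℝ) ≤ Real.sqrt d ^ q := Real.one_le_rpow hsd hq0
    have hm : (1:ℝ) ≤ Real.sqrt d ^ q * 2^E := by nlinarith
    refine ⟨1/CV, (Real.sqrt d ^ q * 2^E) * 2^d, hC₁, by nlinarith, ?_⟩
    intro j hj R hR x hx
    obtain ⟨⟨hV₁, hV₂⟩, ⟨i₁, hi₁⟩, hub⟩ := key_facts a ha hβ1 hj hR hx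
    rw [hEsum] at hV₁ hV₂
    rw [← hCVdef] at hV₂
    have hjβ : (0:ℝ) < (j:ℝ)^β := Real.rpow_pos_of_pos (jr_pos hj) _
    have hxne : x ≠ 0 := by
      intro h0
      rw [h0] at hi₁
      simp only [Pi.zero_apply, abs_zero] at hi₁
      rw [Real.zero_rpow (by
        have := ha i₁
        positivity)] at hi₁
      linarith
    obtain ⟨hcl, i₂, hcu⟩ := aniso_cmp a ha nrm hnrm x hxne
    have hT₁ : (j:ℝ)^β ≤ nrm x := le_trans hi₁ (hcl i₁)
    have hT₂ : nrm x ≤ Real.sqrt d * (2*(j:ℝ))^β :=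
      le_trans hcu (mul_le_mul_of_nonneg_left (hub i₂) (Real.sqrt_nonneg _))
    obtain ⟨hQ₁, hQ₂⟩ := q_bounds (jr_one hj) hq0 hβ0 hEdef.symm hsd hT₁ hT₂
    exact bracket d (Real.rpow_pos_of_pos (jr_pos hj) E) hCV1 hm hV₁ hV₂ hQ₁ hQ₂
  · -- Part 3: the anisotropic bracket
    have hsd : (1:ℝ) ≤ Real.sqrt (d+1 : ℕ) := by
      rw [show (1:ℝ) = Real.sqrt 1 by simp]
      apply Real.sqrt_le_sqrt
      have : (1:ℝ) ≤ ((d+1:ℕ):ℝ) := by exact_mod_cast Nat.succ_le_succ (Nat.zero_le d)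
      linarith
    have hsq : (1:ℝ) ≤ Real.sqrt (d+1 : ℕ) ^ q := Real.one_le_rpow hsd hq0
    have hm : (1:ℝ) ≤ Real.sqrt (d+1 : ℕ) ^ q * 2^E := by nlinarith
    have ha' : ∀ i : Fin (d+1), 1 ≤ (Fin.cons 1 a : Fin (d+1) → ℝ) i := by
      intro i
      refine Fin.cases ?_ ?_ i
      · simp
      · intro i'
        simpa using ha i'
    refine ⟨1/CV, (Real.sqrt (d+1 : ℕ) ^ q * 2^E) * 2^d, hC₁, by nlinarith, ?_⟩
    intro j hj R hR x hx
    obtain ⟨⟨hV₁, hV₂⟩, ⟨i₁, hi₁⟩, hub⟩ := key_facts a ha hβ1 hj hR hx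
    rw [hEsum] at hV₁ hV₂
    rw [← hCVdef] at hV₂
    have hjβ : (0:ℝ) < (j:ℝ)^β := Real.rpow_pos_of_pos (jr_pos hj) _
    have hyne : (Fin.cons 1 x : Fin (d+1) → ℝ) ≠ 0 := by
      intro h0
      have := congrFun h0 0
      simp at this
    obtain ⟨hcl, i₂, hcu⟩ := aniso_cmp (Fin.cons 1 a) ha' nrmE hnrmE (Fin.cons 1 x) hyne
    have hT₁ : (j:ℝ)^β ≤ nrmE (Fin.cons 1 x) := by
      have h1 := hcl i₁.succ
      simp only [Fin.cons_succ] at h1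
      exact le_trans hi₁ h1
    have hT₂ : nrmE (Fin.cons 1 x) ≤ Real.sqrt (d+1 : ℕ) * (2*(j:ℝ))^β := by
      refine le_trans hcu ?_
      apply mul_le_mul_of_nonneg_left _ (Real.sqrt_nonneg _)
      refine Fin.cases ?_ ?_ i₂
      · simp only [Fin.cons_zero, abs_one, Real.one_rpow]
        apply Real.one_le_rpow _ hβ0
        have := jr_one hj
        linarith
      · intro i'
        simp only [Fin.cons_succ]
        exact hub i'
    obtain ⟨hQ₁, hQ₂⟩ := q_bounds (jr_one hj) hq0 hβ0 hEdef.symm hsd hT₁ hT₂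
    exact bracket d (Real.rpow_pos_of_pos (jr_pos hj) E) hCV1 hm hV₁ hV₂ hQ₁ hQ₂
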